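/- Let f ∈ ℍ[t] be a polynomial over the quaternions and let α ∈ ℍ. Then at least one of the following holds: (a) no element of the similarity class [α] is a right root of f and no element of [α] is a left root of f; (b) there is exactly one element of [α] that is a right root of f and exactly one element of [α] that is a left root of f; (c) every element of [α] is both a right root and a left root of f. -/

import Mathlib

open MulOpposite


open Polynomial

/-- Right evaluation of a quaternionic polynomial `f` at `β`:
`evʳ_f(β) = Σ_k f_k β^k`, coefficients on the left. -/
noncomputable def evalR (β : Quaternion ℝ) (f : Polynomial (Quaternion ℝ)) : Quaternion ℝ :=
  ∑ k ∈ Finset.range (f.natDegree + 1), f.coeff k * β ^ k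

/-- Left evaluation of a quaternionic polynomial `f` at `β`:
`evˡ_f(β) = Σ_k β^k f_k`, coefficients on the right. -/
noncomputable def evalL (β : Quaternion ℝ) (f : Polynomial (Quaternion ℝ)) : Quaternion ℝ :=
  ∑ k ∈ Finset.range (f.natDegree + 1), β ^ k * f.coeff k

/-- The similarity class of a quaternion `α`: all `γ α γ⁻¹` with `γ ≠ 0`. -/
def simClass (α : Quaternion ℝ) : Set (Quaternion ℝ) :=
  {β | ∃ γ : Quaternion ℝ, γ ≠ 0 ∧ β = γ * α * γ⁻¹}



lemma evalR_eq (β : Quaternion ℝ) (f : Polynomial (Quaternion ℝ)) :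
    evalR β f = eval₂ (RingHom.id _) β f := by
  rw [eval₂_eq_sum_range]; rfl

lemma evalL_op (β : Quaternion ℝ) (f : Polynomial (Quaternion ℝ)) :
    eval₂ (RingHom.id _) (op β) (opRingEquiv (Quaternion ℝ) (op f)) = op (evalL β f) := by
  rw [eval₂_eq_sum_range, evalL, natDegree_opRingEquiv, unop_op]
  rw [show (op (∑ k ∈ Finset.range (f.natDegree + 1), β ^ k * f.coeff k))
      = ∑ k ∈ Finset.range (f.natDegree + 1), op (β ^ k * f.coeff k) from
    map_sum (opAddEquiv : Quaternion ℝ ≃+ (Quaternion ℝ)ᵐᵒᵖ) _ _]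
  apply Finset.sum_congr rfl
  intro k _
  rw [coeff_opRingEquiv, RingHom.id_apply, unop_op, ← op_pow, ← op_mul]

lemma evalR_small (β : Quaternion ℝ) {r : Polynomial (Quaternion ℝ)} (h : r.natDegree ≤ 1) :
    evalR β r = r.coeff 0 + r.coeff 1 * β := by
  rw [evalR_eq, eval₂_eq_sum_range' (RingHom.id _) (lt_of_le_of_lt h (by norm_num : (1:ℕ) < 2)) β]
  simp [Finset.sum_range_succ]

lemma evalL_small (β : Quaternion ℝ) {r : Polynomial (Quaternion ℝ)} (h : r.natDegree ≤ 1) :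
    evalL β r = r.coeff 0 + β * r.coeff 1 := by
  have : evalL β r = ∑ k ∈ Finset.range 2, β ^ k * r.coeff k := by
    rw [evalL]
    apply Finset.sum_subset
    · exact Finset.range_subset_range.2 (by omega)
    · intro k _ hk
      have : r.natDegree < k := by
        simp only [Finset.mem_range, not_lt] at hk ⊢
        omega
      rw [coeff_eq_zero_of_natDegree_lt this, mul_zero]
  rw [this]
  simp [Finset.sum_range_succ]

/-- A polynomial with real (central) coefficients commutes with everything. -/
lemma central_commute (p : Polynomial ℝ) (q : Polynomial (Quaternion ℝ)) :
    Commute (p.map (algebraMap ℝ (Quaternion ℝ))) q := by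
  induction q using Polynomial.induction_on' with
  | add u v hu hv => exact hu.add_right hv
  | monomial n a =>
    rw [← C_mul_X_pow_eq_monomial]
    have hC : Commute (p.map (algebraMap ℝ (Quaternion ℝ))) (C a) := by
      apply Commute.symm
      unfold Commute SemiconjBy
      refine Polynomial.ext fun m => ?_
      rw [coeff_C_mul, coeff_mul_C, coeff_map]
      exact (Algebra.commutes (p.coeff m) a).symm
    exact hC.mul_right (((commute_X _).symm).pow_right n)

lemma char_root {α β : Quaternion ℝ} (hβ : β ∈ simClass α) :
    β ^ 2 - ↑(2 * α.re) * β + ↑(Quaternion.normSq α) = 0 := by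
  obtain ⟨γ, hγ, rfl⟩ := hβ
  have hα : α ^ 2 - ↑(2 * α.re) * α + ↑(Quaternion.normSq α) = 0 := by
    have h1 : α * (α + star α) = α ^ 2 + ↑(Quaternion.normSq α) := by
      rw [mul_add, Quaternion.self_mul_star, sq]
    rw [Quaternion.self_add_star', ← Quaternion.coe_commutes] at h1
    rw [h1]; abel
  have h2 := congrArg (fun x => γ * x * γ⁻¹) hα
  simp only [mul_sub, mul_add, sub_mul, add_mul, mul_zero, zero_mul] at h2
  rw [← h2]
  simp only [sq, mul_assoc, inv_mul_cancel_left₀ hγ]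
  have e2 : (↑(2 * α.re) : Quaternion ℝ) * (γ * (α * γ⁻¹)) = γ * (↑(2 * α.re) * (α * γ⁻¹)) := by
    rw [← mul_assoc, Quaternion.coe_commutes, mul_assoc]
  have e3 : γ * ((↑(Quaternion.normSq α) : Quaternion ℝ) * γ⁻¹) = ↑(Quaternion.normSq α) := by
    rw [Quaternion.coe_commutes, ← mul_assoc, mul_inv_cancel₀ hγ, one_mul]
  rw [e2, e3]

set_option synthInstance.maxHeartbeats 1000000 in
set_option maxHeartbeats 1000000 in
lemma key (f : Polynomial (Quaternion ℝ)) (α : Quaternion ℝ) :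
    ∃ a b : Quaternion ℝ, ∀ β ∈ simClass α,
      evalR β f = b + a * β ∧ evalL β f = b + β * a := by
  set t : ℝ := 2 * α.re with ht
  set n : ℝ := Quaternion.normSq α with hn
  set p : Polynomial ℝ := X ^ 2 + (C (-t) * X + C n) with hp
  have hdeg1 : (C (-t) * X + C n : Polynomial ℝ).degree < 2 := by
    exact lt_of_le_of_lt degree_linear_le (by norm_num)
  have hpm : p.Monic := monic_X_pow_add hdeg1
  have hpd : p.natDegree = 2 := by
    have : p.degree = 2 := by
      rw [hp, degree_add_eq_left_of_degree_lt (by rwa [degree_X_pow])]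
      exact degree_X_pow 2
    exact natDegree_eq_of_degree_eq_some this
  set c : Polynomial (Quaternion ℝ) := p.map (algebraMap ℝ (Quaternion ℝ)) with hc
  have hcm : c.Monic := hpm.map _
  have hcd : c.natDegree = 2 := by rw [hc, hpm.natDegree_map, hpd]
  have hc1 : c ≠ 1 := by
    intro h
    rw [h, natDegree_one] at hcd
    norm_num at hcd
  set r : Polynomial (Quaternion ℝ) := f %ₘ c with hr
  have hrd : r.natDegree ≤ 1 := by
    have h2 := natDegree_modByMonic_lt f hcm hc1
    rw [← hr, hcd] at h2
    omega
  set q : Polynomial (Quaternion ℝ) := f /ₘ c with hq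
  have hdiv : f = r + c * q := (modByMonic_add_div f c).symm
  have hcoeff : ∀ k x, Commute (c.coeff k) x := by
    intro k x
    rw [hc, coeff_map]
    exact Algebra.commute_algebraMap_left _ _
  refine ⟨r.coeff 1, r.coeff 0, fun β hβ => ?_⟩
  have hceval : eval₂ (RingHom.id _) β c = 0 := by
    rw [hc, eval₂_map, RingHom.id_comp, ← aeval_def, hp]
    simp only [map_add, map_mul, map_pow, aeval_X, aeval_C, map_neg]
    rw [Quaternion.algebraMap_def]
    have h := char_root hβ
    rw [← ht, ← hn] at h
    rw [← h, neg_mul]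
    abel
  have hcomm : c * q = q * c := (central_commute p q).eq
  have hrEval : evalR β f = r.coeff 0 + r.coeff 1 * β := by
    rw [evalR_eq]
    conv_lhs => rw [hdiv, hcomm]
    rw [eval₂_add, eval₂_mul_noncomm _ _ (fun k => by
      simpa using hcoeff k β), hceval, mul_zero, add_zero, ← evalR_eq,
      evalR_small β hrd]
  have hlceval : evalL β c = 0 := by
    have hLR : evalL β c = evalR β c := by
      apply Finset.sum_congr rfl
      intro k _
      exact ((hcoeff k (β ^ k)).eq).symm
    rw [hLR, evalR_eq, hceval]
  have hlEval : evalL β f = r.coeff 0 + β * r.coeff 1 := by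
    have hop : op (evalL β f) = op (evalL β r) := by
      rw [← evalL_op, ← evalL_op]
      conv_lhs => rw [hdiv]
      rw [op_add, map_add, eval₂_add, op_mul, map_mul,
        eval₂_mul_noncomm _ _ (fun k => by
          simp only [RingHom.id_apply, coeff_opRingEquiv, unop_op]
          exact (hcoeff k β).op), evalL_op, evalL_op, evalL_op, hlceval, op_zero, mul_zero, add_zero]
    have := op_injective hop
    rw [this, evalL_small β hrd]
  exact ⟨hrEval, hlEval⟩

lemma conj_mem {α x : Quaternion ℝ} (hx : x ∈ simClass α) {a : Quaternion ℝ} (ha : a ≠ 0) :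
    a * x * a⁻¹ ∈ simClass α := by
  obtain ⟨γ, hγ, rfl⟩ := hx
  exact ⟨a * γ, mul_ne_zero ha hγ, by rw [mul_inv_rev]; simp [mul_assoc]⟩


/-- Trichotomy for roots of a quaternionic polynomial in a similarity class `[α]`:
either `[α]` contains no right roots and no left roots of `f`, or it contains a unique
right root and a unique left root, or every element of `[α]` is both a right and a
left root of `f`. -/
theorem root_trichotomy (f : Polynomial (Quaternion ℝ)) (α : Quaternion ℝ) :
    ((∀ β ∈ simClass α, evalR β f ≠ 0) ∧ (∀ β ∈ simClass α, evalL β f ≠ 0)) ∨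
    ((∃! β : Quaternion ℝ, β ∈ simClass α ∧ evalR β f = 0) ∧
     (∃! β : Quaternion ℝ, β ∈ simClass α ∧ evalL β f = 0)) ∨
    (∀ β ∈ simClass α, evalR β f = 0 ∧ evalL β f = 0) := by
  obtain ⟨a, b, H⟩ := key f α
  by_cases ha : a = 0
  · by_cases hb : b = 0
    · right; right
      intro β hβ
      rw [(H β hβ).1, (H β hβ).2, ha, hb]
      constructor <;> simp
    · left
      constructor <;> intro β hβ hroot
      · rw [(H β hβ).1, ha, zero_mul, add_zero] at hroot
        exact hb hroot
      · rw [(H β hβ).2, ha, mul_zero, add_zero] at hroot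
        exact hb hroot
  · set x : Quaternion ℝ := -(a⁻¹ * b) with hxdef
    set y : Quaternion ℝ := -(b * a⁻¹) with hydef
    have hxy : y = a * x * a⁻¹ := by
      rw [hxdef, hydef, mul_neg, mul_inv_cancel_left₀ ha, neg_mul]
    have hyx : x = a⁻¹ * y * (a⁻¹)⁻¹ := by
      rw [inv_inv, hxy]
      rw [← mul_assoc, ← mul_assoc, inv_mul_cancel₀ ha, one_mul, mul_assoc,
        inv_mul_cancel₀ ha, mul_one]
    have hRiff : ∀ β ∈ simClass α, (evalR β f = 0 ↔ β = x) := by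
      intro β hβ
      rw [(H β hβ).1]
      constructor
      · intro h
        have h2 : a * β = -b := eq_neg_of_add_eq_zero_right h
        have h3 : β = a⁻¹ * (a * β) := (inv_mul_cancel_left₀ ha β).symm
        rw [h2, mul_neg] at h3
        exact h3
      · intro h
        rw [h, hxdef, mul_neg, mul_inv_cancel_left₀ ha, add_neg_cancel]
    have hLiff : ∀ β ∈ simClass α, (evalL β f = 0 ↔ β = y) := by
      intro β hβ
      rw [(H β hβ).2]
      constructor
      · intro h
        have h2 : β * a = -b := eq_neg_of_add_eq_zero_right h
        have h3 : β = β * a * a⁻¹ := (mul_inv_cancel_right₀ ha β).symm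
        rw [h2, neg_mul] at h3
        exact h3
      · intro h
        rw [h, hydef, neg_mul, mul_assoc, inv_mul_cancel₀ ha, mul_one, add_neg_cancel]
    by_cases hx : x ∈ simClass α
    · right; left
      have hy : y ∈ simClass α := hxy ▸ conj_mem hx ha
      constructor
      · exact ⟨x, ⟨hx, (hRiff x hx).2 rfl⟩, fun β hβ => (hRiff β hβ.1).1 hβ.2⟩
      · exact ⟨y, ⟨hy, (hLiff y hy).2 rfl⟩, fun β hβ => (hLiff β hβ.1).1 hβ.2⟩
    · left
      constructor <;> intro β hβ hroot
      · exact hx (((hRiff β hβ).1 hroot) ▸ hβ)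
      · have hβy : β = y := (hLiff β hβ).1 hroot
        rw [hβy] at hβ
        exact hx (hyx ▸ conj_mem hβ (inv_ne_zero ha))
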